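/- Consider the discrete-time system ξ_{k+1} = A ξ_k + B w_k with output ψ_k = C ξ_k + D w_k. Suppose there exist a symmetric positive definite matrix P and ρ ∈ (0,1) such that for all ξ, w: (Aξ + Bw)ᵀ P (Aξ + Bw) - ρ² ξᵀ P ξ + ψᵀ M ψ ≤ 0 where ψ = Cξ + Dw, and suppose the trajectory satisfies the ρ-hard IQC Σ_{k=0}^{T} ρ^{-2k} ψ_kᵀ M ψ_k ≥ 0 for all T ≥ 0. Then for all k, ‖ξ_k‖ ≤ √(κ_P) ρ^k ‖ξ_0‖, where κ_P is the condition number of P (ratio of largest to smallest eigenvalue). -/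

import Mathlib

open Finset Matrix

lemma quad_decomp {n : ℕ} {P : Matrix (Fin n) (Fin n) ℝ} (hP : P.IsHermitian)
    (x : Fin n → ℝ) :
    x ⬝ᵥ P *ᵥ x = ∑ i, hP.eigenvalues i *
        ((star (hP.eigenvectorUnitary : Matrix (Fin n) (Fin n) ℝ)) *ᵥ x) i ^ 2 ∧
      x ⬝ᵥ x = ∑ i, ((star (hP.eigenvectorUnitary : Matrix (Fin n) (Fin n) ℝ)) *ᵥ x) i ^ 2 := by
  set U := (hP.eigenvectorUnitary : Matrix (Fin n) (Fin n) ℝ) with hUdef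
  set y := (star U) *ᵥ x with hy
  have hstar : star U = Uᵀ := by
    rw [Matrix.star_eq_conjTranspose, conjTranspose_eq_transpose_of_trivial]
  have hU : U * star U = 1 := Matrix.mem_unitaryGroup_iff.mp hP.eigenvectorUnitary.2
  have hU' : star U * U = 1 := Matrix.mem_unitaryGroup_iff'.mp hP.eigenvectorUnitary.2
  constructor
  · conv_lhs => rw [hP.spectral_theorem, Unitary.conjStarAlgAut_apply]
    have h1 : (U * diagonal (RCLike.ofReal ∘ hP.eigenvalues) * star U) *ᵥ x
        = U *ᵥ (diagonal (RCLike.ofReal ∘ hP.eigenvalues) *ᵥ y) := by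
      rw [Matrix.mul_assoc, ← mulVec_mulVec, ← mulVec_mulVec]
    rw [h1, Matrix.dotProduct_mulVec, ← Matrix.mulVec_transpose, ← hstar, ← hy]
    simp [dotProduct, mulVec_diagonal]
    exact Finset.sum_congr rfl fun i _ => by ring
  · have hx : x = U *ᵥ y := by
      rw [hy, mulVec_mulVec, hU]; simp
    conv_lhs => rw [hx]
    rw [Matrix.dotProduct_mulVec, ← Matrix.mulVec_transpose, ← hstar, mulVec_mulVec, hU']
    simp [dotProduct]
    ring_nf

/-- Lyapunov/IQC argument: LMI plus ρ-hard IQC implies exponential decay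
of the state with rate ρ and overshoot √(κ_P). -/
theorem stmt4 {n m s : ℕ} [NeZero n]
    (A : Matrix (Fin n) (Fin n) ℝ) (B : Matrix (Fin n) (Fin m) ℝ)
    (C : Matrix (Fin s) (Fin n) ℝ) (D : Matrix (Fin s) (Fin m) ℝ)
    (M : Matrix (Fin s) (Fin s) ℝ) (hM : M.IsSymm)
    (P : Matrix (Fin n) (Fin n) ℝ) (hP : P.PosDef)
    (ρ : ℝ) (hρ : ρ ∈ Set.Ioo (0 : ℝ) 1)
    (ξ : ℕ → Fin n → ℝ) (w : ℕ → Fin m → ℝ) (ψ : ℕ → Fin s → ℝ)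
    (hdyn : ∀ k, ξ (k + 1) = A.mulVec (ξ k) + B.mulVec (w k))
    (hout : ∀ k, ψ k = C.mulVec (ξ k) + D.mulVec (w k))
    (hLMI : ∀ (x : Fin n → ℝ) (u : Fin m → ℝ),
      (A.mulVec x + B.mulVec u) ⬝ᵥ P.mulVec (A.mulVec x + B.mulVec u)
        - ρ ^ 2 * (x ⬝ᵥ P.mulVec x)
        + (C.mulVec x + D.mulVec u) ⬝ᵥ M.mulVec (C.mulVec x + D.mulVec u) ≤ 0)
    (hIQC : ∀ T : ℕ, 0 ≤ ∑ k ∈ range (T + 1), (ρ ^ (2 * k))⁻¹ * (ψ k ⬝ᵥ M.mulVec (ψ k))) :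
    ∀ k : ℕ, Real.sqrt (∑ i, ξ k i ^ 2) ≤
      Real.sqrt ((⨆ i, hP.1.eigenvalues i) / (⨅ i, hP.1.eigenvalues i)) *
        ρ ^ k * Real.sqrt (∑ i, ξ 0 i ^ 2) := by
  obtain ⟨hρ0, hρ1⟩ := hρ
  have hρne : ρ ≠ 0 := ne_of_gt hρ0
  set V : ℕ → ℝ := fun k => ξ k ⬝ᵥ P *ᵥ ξ k with hV
  set q : ℕ → ℝ := fun k => ψ k ⬝ᵥ M *ᵥ ψ k with hq
  set S : ℕ → ℝ := fun T => ∑ k ∈ range T, (ρ ^ (2 * k))⁻¹ * q k with hSdef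
  -- one-step decrease
  have hstep : ∀ k, V (k + 1) ≤ ρ ^ 2 * V k - q k := by
    intro k
    have := hLMI (ξ k) (w k)
    rw [← hdyn k, ← hout k] at this
    simp only [hV, hq]
    linarith
  -- nonnegativity of partial IQC sums
  have hS : ∀ T, 0 ≤ S T := by
    intro T
    cases T with
    | zero => simp [hSdef]
    | succ T' => exact hIQC T'
  -- key telescoped inequality
  have key : ∀ T, V T ≤ ρ ^ (2 * T) * (V 0 - (ρ ^ 2)⁻¹ * S T) := by
    intro T
    induction T with
    | zero => simp [hSdef]
    | succ T ih =>
      have h1 : V (T + 1) ≤ ρ ^ 2 * V T - q T := hstep T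
      have h2 : ρ ^ 2 * V T ≤ ρ ^ 2 * (ρ ^ (2 * T) * (V 0 - (ρ ^ 2)⁻¹ * S T)) :=
        mul_le_mul_of_nonneg_left ih (by positivity)
      have h3 : S (T + 1) = S T + (ρ ^ (2 * T))⁻¹ * q T := by
        simp [hSdef, Finset.sum_range_succ]
      have h4 : ρ ^ 2 * (ρ ^ (2 * T) * (V 0 - (ρ ^ 2)⁻¹ * S T)) - q T
          = ρ ^ (2 * (T + 1)) * (V 0 - (ρ ^ 2)⁻¹ * S (T + 1)) := by
        rw [h3]
        have e1 : ρ ^ (2 * (T + 1)) = ρ ^ (2 * T) * ρ ^ 2 := by ring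
        rw [e1]
        have hpow : (ρ ^ (2 * T)) ≠ 0 := pow_ne_zero _ hρne
        field_simp
        ring
      linarith
  have decay : ∀ T, V T ≤ ρ ^ (2 * T) * V 0 := by
    intro T
    have := key T
    have hc : 0 ≤ (ρ ^ 2)⁻¹ * S T := mul_nonneg (by positivity) (hS T)
    have hpow : (0:ℝ) ≤ ρ ^ (2 * T) := by positivity
    nlinarith
  -- eigenvalue bounds
  set eig := hP.1.eigenvalues with heig
  have heigpos : ∀ i, 0 < eig i := fun i => hP.eigenvalues_pos i
  have hne : Nonempty (Fin n) := Fin.pos_iff_nonempty.mp (Nat.pos_of_ne_zero (NeZero.ne n))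
  set lmin := ⨅ i, eig i with hlmin
  set lmax := ⨆ i, eig i with hlmax
  have hbdd : BddBelow (Set.range eig) := (Set.finite_range eig).bddBelow
  have hbdd' : BddAbove (Set.range eig) := (Set.finite_range eig).bddAbove
  have hmin_le : ∀ i, lmin ≤ eig i := fun i => ciInf_le hbdd i
  have hle_max : ∀ i, eig i ≤ lmax := fun i => le_ciSup hbdd' i
  have hlmin_pos : 0 < lmin := by
    obtain ⟨i0, hi0⟩ := Finite.exists_min eig
    exact lt_of_lt_of_le (heigpos i0) (le_ciInf hi0)
  have hlmax_pos : 0 < lmax := lt_of_lt_of_le (heigpos (Classical.arbitrary _)) (hle_max _)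
  -- quadratic form bounds
  have hlower : ∀ k, lmin * (∑ i, ξ k i ^ 2) ≤ V k := by
    intro k
    obtain ⟨h1, h2⟩ := quad_decomp hP.1 (ξ k)
    have hdot : ξ k ⬝ᵥ ξ k = ∑ i, ξ k i ^ 2 := by
      simp [dotProduct, sq]
    rw [← hdot, h2, hV]
    simp only [h1, Finset.mul_sum]
    refine Finset.sum_le_sum fun i _ => ?_
    exact mul_le_mul_of_nonneg_right (hmin_le i) (sq_nonneg _)
  have hupper : V 0 ≤ lmax * (∑ i, ξ 0 i ^ 2) := by
    obtain ⟨h1, h2⟩ := quad_decomp hP.1 (ξ 0)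
    have hdot : ξ 0 ⬝ᵥ ξ 0 = ∑ i, ξ 0 i ^ 2 := by
      simp [dotProduct, sq]
    rw [← hdot, h2, hV]
    simp only [h1, Finset.mul_sum]
    refine Finset.sum_le_sum fun i _ => ?_
    exact mul_le_mul_of_nonneg_right (hle_max i) (sq_nonneg _)
  intro k
  -- squared inequality
  have hsq : (∑ i, ξ k i ^ 2) ≤ (lmax / lmin) * (ρ ^ k) ^ 2 * (∑ i, ξ 0 i ^ 2) := by
    have c1 : lmin * (∑ i, ξ k i ^ 2) ≤ ρ ^ (2 * k) * (lmax * (∑ i, ξ 0 i ^ 2)) := by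
      calc lmin * (∑ i, ξ k i ^ 2) ≤ V k := hlower k
        _ ≤ ρ ^ (2 * k) * V 0 := decay k
        _ ≤ ρ ^ (2 * k) * (lmax * (∑ i, ξ 0 i ^ 2)) :=
            mul_le_mul_of_nonneg_left hupper (by positivity)
    have e : ρ ^ (2 * k) = (ρ ^ k) ^ 2 := by rw [mul_comm, pow_mul]
    rw [e] at c1
    rw [div_mul_eq_mul_div, div_mul_eq_mul_div, le_div_iff₀ hlmin_pos]
    nlinarith
  calc Real.sqrt (∑ i, ξ k i ^ 2)
      ≤ Real.sqrt ((lmax / lmin) * (ρ ^ k) ^ 2 * (∑ i, ξ 0 i ^ 2)) := Real.sqrt_le_sqrt hsq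
    _ = Real.sqrt (lmax / lmin) * ρ ^ k * Real.sqrt (∑ i, ξ 0 i ^ 2) := by
        rw [Real.sqrt_mul (by positivity), Real.sqrt_mul (by positivity),
          Real.sqrt_sq (by positivity)]
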